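/- For every 0 ≤ p < 1 there exists a p-large measurable set E ⊆ ℝ that contains no infinite arithmetic progression: there are no x ∈ ℝ and y ≠ 0 such that x + y·n ∈ E for all positive integers n. -/

import Mathlib

open MeasureTheory Filter

/-- A measurable set `E ⊆ ℝ` is `p`-large if `m(E ∩ [k, k+1]) ≥ p` for every integer `k`. -/
def PLarge (p : ℝ) (E : Set ℝ) : Prop :=
  ∀ k : ℤ, ENNReal.ofReal p ≤ volume (E ∩ Set.Icc (k : ℝ) (k + 1))

namespace Stmt10Aux

open Set

noncomputable section

/-- Block boundaries. -/
def AA : ℕ → ℕ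
  | 0 => 0
  | i + 1 => AA i + i + 2

lemma AA_succ (i : ℕ) : AA (i + 1) = AA i + i + 2 := rfl

lemma AA_mono : Monotone AA :=
  monotone_nat_of_le_succ fun i => by rw [AA_succ]; omega

lemma AA_ge (i : ℕ) : i ≤ AA i := by
  induction i with
  | zero => simp [AA]
  | succ n ih => rw [AA_succ]; omega

def bb (i : ℕ) : ℕ := (Nat.unpair (Nat.unpair i).1).1 + 1
def cc (i : ℕ) : ℕ := (Nat.unpair (Nat.unpair i).1).2
def qq (q₀ i : ℕ) : ℕ := cc i + q₀
def dd (q₀ i : ℕ) : ℕ := qq q₀ i * bb i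

lemma one_le_bb (i : ℕ) : 1 ≤ bb i := Nat.succ_le_succ (Nat.zero_le _)
lemma q₀_le_qq (q₀ i : ℕ) : q₀ ≤ qq q₀ i := Nat.le_add_left _ _
lemma qq_le_dd (q₀ i : ℕ) : qq q₀ i ≤ dd q₀ i :=
  Nat.le_mul_of_pos_right _ (one_le_bb i)

/-- The hole set in block `i`. -/
def G (q₀ i : ℕ) : Set ℝ :=
  {t | (AA i : ℝ) ≤ |t| ∧ |t| ≤ (AA (i + 1) : ℝ) ∧
    ∃ j : ℤ, |(dd q₀ i : ℝ) * t - (j : ℝ)| < 1 / (qq q₀ i : ℝ)}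

def H (q₀ : ℕ) : Set ℝ := ⋃ i, G q₀ i

lemma measurableSet_G (q₀ i : ℕ) : MeasurableSet (G q₀ i) := by
  have h : G q₀ i = (abs ⁻¹' Ici ((AA i : ℝ))) ∩ ((abs ⁻¹' Iic ((AA (i + 1) : ℝ))) ∩
      (⋃ j : ℤ, (fun t : ℝ => |(dd q₀ i : ℝ) * t - (j : ℝ)|) ⁻¹' Iio (1 / (qq q₀ i : ℝ)))) := by
    ext t; simp [G]
  rw [h]
  refine (isClosed_Ici.preimage continuous_abs).measurableSet.inter
    (((isClosed_Iic.preimage continuous_abs).measurableSet).inter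
      (MeasurableSet.iUnion fun j => (isOpen_Iio.preimage (by fun_prop)).measurableSet))

lemma measurableSet_H (q₀ : ℕ) : MeasurableSet (H q₀) :=
  MeasurableSet.iUnion fun i => measurableSet_G q₀ i

lemma neg_mem_G {q₀ i : ℕ} {t : ℝ} (h : t ∈ G q₀ i) : -t ∈ G q₀ i := by
  obtain ⟨h1, h2, j, hj⟩ := h
  refine ⟨by simpa using h1, by simpa using h2, ⟨-j, ?_⟩⟩
  push_cast
  rw [show (dd q₀ i : ℝ) * -t - -(j : ℝ) = -((dd q₀ i : ℝ) * t - j) by ring, abs_neg]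
  exact hj

lemma neg_mem_H {q₀ : ℕ} {t : ℝ} (h : t ∈ H q₀) : -t ∈ H q₀ := by
  rw [H, mem_iUnion] at h ⊢
  obtain ⟨i, hi⟩ := h
  exact ⟨i, neg_mem_G hi⟩

/-- Volume of the holes of one block inside a unit cell. -/
lemma vol_G_cell {q₀ : ℕ} (hq₀ : 1 ≤ q₀) (i : ℕ) (k : ℤ) :
    volume (G q₀ i ∩ Icc (k : ℝ) (k + 1)) ≤ ENNReal.ofReal (4 / (q₀ : ℝ)) := by
  set q := qq q₀ i with hq
  set d := dd q₀ i with hd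
  have hq1 : 1 ≤ q := le_trans hq₀ (q₀_le_qq q₀ i)
  have hd1 : 1 ≤ d := le_trans hq1 (qq_le_dd q₀ i)
  have hq0r : (0 : ℝ) < q := by exact_mod_cast hq1
  have hd0r : (0 : ℝ) < d := by exact_mod_cast hd1
  have hq1r : (1 : ℝ) ≤ q := by exact_mod_cast hq1
  have hd1r : (1 : ℝ) ≤ d := by exact_mod_cast hd1
  have hq₀0r : (0 : ℝ) < q₀ := by exact_mod_cast hq₀
  have hq₀q : (q₀ : ℝ) ≤ q := by exact_mod_cast q₀_le_qq q₀ i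
  set J : Finset ℤ := Finset.Icc (k * d) (k * d + d) with hJ
  have cover : G q₀ i ∩ Icc (k : ℝ) (k + 1) ⊆
      ⋃ j ∈ J, Ioo ((j : ℝ) / d - 1 / (q * d)) ((j : ℝ) / d + 1 / (q * d)) := by
    rintro t ⟨⟨-, -, j, hj⟩, ht1, ht2⟩
    have habs := abs_lt.mp hj
    have hdk : (d : ℝ) * k ≤ d * t := by nlinarith
    have hdk2 : (d : ℝ) * t ≤ d * (k + 1) := by nlinarith
    have hinv : 1 / (q : ℝ) ≤ 1 := by
      rw [div_le_one hq0r]; exact hq1r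
    have hjl : (k * d : ℤ) ≤ j := by
      have : ((k * d : ℤ) : ℝ) - 1 < (j : ℝ) := by push_cast; nlinarith
      have := (sub_lt_iff_lt_add.mp this)
      have : ((k * d : ℤ) : ℝ) < (j : ℝ) + 1 := this
      exact_mod_cast Int.lt_add_one_iff.mp (by exact_mod_cast this)
    have hjr : j ≤ k * d + d := by
      have : (j : ℝ) < ((k * d + d : ℤ) : ℝ) + 1 := by push_cast; nlinarith
      exact Int.lt_add_one_iff.mp (by exact_mod_cast this)
    refine mem_iUnion₂.mpr ⟨j, Finset.mem_Icc.mpr ⟨hjl, hjr⟩, ?_⟩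
    constructor
    · have e1 : (j : ℝ) / d - 1 / (q * d) = ((j : ℝ) - 1 / q) / d := by
        field_simp
      rw [e1, div_lt_iff₀ hd0r]
      nlinarith
    · have e2 : (j : ℝ) / d + 1 / (q * d) = ((j : ℝ) + 1 / q) / d := by
        field_simp
      rw [e2, lt_div_iff₀ hd0r]
      nlinarith
  calc volume (G q₀ i ∩ Icc (k : ℝ) (k + 1))
      ≤ volume (⋃ j ∈ J, Ioo ((j : ℝ) / d - 1 / (q * d)) ((j : ℝ) / d + 1 / (q * d))) :=
        measure_mono cover
    _ ≤ ∑ j ∈ J, volume (Ioo ((j : ℝ) / d - 1 / (q * d)) ((j : ℝ) / d + 1 / (q * d))) :=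
        measure_biUnion_finset_le J _
    _ = ∑ _j ∈ J, ENNReal.ofReal (2 / (q * d)) := by
        refine Finset.sum_congr rfl fun j _ => ?_
        rw [Real.volume_Ioo]
        congr 1
        ring
    _ = J.card • ENNReal.ofReal (2 / (q * d)) := Finset.sum_const _
    _ = ENNReal.ofReal ((d + 1 : ℕ) : ℝ) * ENNReal.ofReal (2 / (q * d)) := by
        have hcard : J.card = d + 1 := by
          rw [hJ, Int.card_Icc]
          omega
        rw [hcard, nsmul_eq_mul, ENNReal.ofReal_natCast]
    _ = ENNReal.ofReal (((d + 1 : ℕ) : ℝ) * (2 / (q * d))) := by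
        rw [ENNReal.ofReal_mul (by positivity)]
    _ ≤ ENNReal.ofReal (4 / (q₀ : ℝ)) := by
        apply ENNReal.ofReal_le_ofReal
        have key : ((d + 1 : ℕ) : ℝ) * (2 / (q * d)) ≤ 4 / q := by
          have e : ((d + 1 : ℕ) : ℝ) * (2 / (q * d)) = (2 * ((d : ℝ) + 1)) / (q * d) := by
            push_cast; ring
          rw [e, div_le_div_iff₀ (by positivity) hq0r]
          nlinarith
        refine le_trans key ?_
        apply div_le_div_of_nonneg_left (by norm_num) hq₀0r hq₀q

lemma exists_block (k : ℕ) : ∃ i, AA i ≤ k ∧ k + 1 ≤ AA (i + 1) := by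
  induction k with
  | zero => exact ⟨0, by simp [AA], by simp [AA]⟩
  | succ n ih =>
    obtain ⟨i, h1, h2⟩ := ih
    by_cases h : n + 2 ≤ AA (i + 1)
    · exact ⟨i, by omega, h⟩
    · refine ⟨i + 1, by omega, ?_⟩
      rw [AA_succ (i + 1)]
      omega

lemma vol_H_cell_nat {q₀ : ℕ} (hq₀ : 1 ≤ q₀) (k : ℕ) :
    volume (H q₀ ∩ Icc (k : ℝ) ((k : ℝ) + 1)) ≤ ENNReal.ofReal (4 / (q₀ : ℝ)) := by
  obtain ⟨i, hik, hik2⟩ := exists_block k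
  have hsub : H q₀ ∩ Icc (k : ℝ) ((k : ℝ) + 1) ⊆
      (G q₀ i ∩ Icc (k : ℝ) ((k : ℝ) + 1)) ∪ {(k : ℝ), (k : ℝ) + 1} := by
    rintro t ⟨hH, ht⟩
    rw [H, mem_iUnion] at hH
    obtain ⟨i', hG⟩ := hH
    have ht0 : (0 : ℝ) ≤ t := le_trans (by positivity) ht.1
    have habs : |t| = t := abs_of_nonneg ht0
    rcases lt_trichotomy i' i with hlt | heq | hgt
    · right
      left
      have h1 : t ≤ (AA (i' + 1) : ℝ) := habs ▸ hG.2.1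
      have h2 : (AA (i' + 1) : ℕ) ≤ AA i := AA_mono hlt
      have h3 : (AA i : ℝ) ≤ k := by exact_mod_cast hik
      have : t ≤ (k : ℝ) := by
        refine le_trans h1 (le_trans ?_ h3)
        exact_mod_cast h2
      exact le_antisymm this ht.1
    · subst heq; exact Or.inl ⟨hG, ht⟩
    · right
      right
      have h1 : (AA i' : ℝ) ≤ t := habs ▸ hG.1
      have h2 : AA (i + 1) ≤ AA i' := AA_mono hgt
      have h3 : ((k : ℝ) + 1) ≤ (AA i' : ℝ) := by
        have : (k + 1 : ℕ) ≤ AA i' := le_trans hik2 h2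
        exact_mod_cast this
      exact mem_singleton_iff.mpr (le_antisymm ht.2 (le_trans h3 h1))
  calc volume (H q₀ ∩ Icc (k : ℝ) ((k : ℝ) + 1))
      ≤ volume ((G q₀ i ∩ Icc (k : ℝ) ((k : ℝ) + 1)) ∪ {(k : ℝ), (k : ℝ) + 1}) :=
        measure_mono hsub
    _ ≤ volume (G q₀ i ∩ Icc (k : ℝ) ((k : ℝ) + 1)) + volume ({(k : ℝ), (k : ℝ) + 1} : Set ℝ) :=
        measure_union_le _ _
    _ = volume (G q₀ i ∩ Icc (k : ℝ) ((k : ℝ) + 1)) := by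
        have hz : volume ({(k : ℝ), (k : ℝ) + 1} : Set ℝ) = 0 :=
          ((Set.finite_singleton ((k : ℝ) + 1)).insert (k : ℝ)).measure_zero volume
        rw [hz, add_zero]
    _ ≤ ENNReal.ofReal (4 / (q₀ : ℝ)) := by
        have := vol_G_cell hq₀ i (k : ℤ)
        simpa using this

lemma vol_H_cell {q₀ : ℕ} (hq₀ : 1 ≤ q₀) (k : ℤ) :
    volume (H q₀ ∩ Icc (k : ℝ) ((k : ℝ) + 1)) ≤ ENNReal.ofReal (4 / (q₀ : ℝ)) := by
  rcases le_or_gt 0 k with hk | hk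
  · lift k to ℕ using hk
    exact_mod_cast vol_H_cell_nat hq₀ k
  · have hset : H q₀ ∩ Icc (k : ℝ) ((k : ℝ) + 1)
        = -(H q₀ ∩ Icc ((-k : ℝ) - 1) (((-k : ℝ) - 1) + 1)) := by
      ext t
      simp only [Set.mem_neg, Set.mem_inter_iff, Set.mem_Icc]
      constructor
      · rintro ⟨h1, h2, h3⟩
        exact ⟨neg_mem_H h1, by linarith, by linarith⟩
      · rintro ⟨h1, h2, h3⟩
        have := neg_mem_H h1
        rw [neg_neg] at this
        exact ⟨this, by linarith, by linarith⟩
    rw [hset, Measure.measure_neg]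
    have hk' : 0 ≤ -k - 1 := by omega
    lift (-k - 1) to ℕ using hk' with m hm
    have : ((-k : ℝ) - 1) = (m : ℝ) := by exact_mod_cast congrArg (Int.cast : ℤ → ℝ) hm.symm
    rw [this]
    exact_mod_cast vol_H_cell_nat hq₀ m

/-- Dirichlet: arbitrarily large `q` with `‖qθ‖ < 1/q`. -/
lemma dirichlet (θ : ℝ) (Q : ℕ) (hQ : 1 ≤ Q) :
    ∃ q : ℕ, Q ≤ q ∧ ∃ j : ℤ, |(q : ℝ) * θ - (j : ℝ)| < 1 / (q : ℝ) := by
  by_cases hrat : ∃ r : ℚ, (r : ℝ) = θ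
  · obtain ⟨r, hr⟩ := hrat
    refine ⟨r.den * Q, Nat.le_mul_of_pos_left Q r.pos, ⟨r.num * Q, ?_⟩⟩
    have hden : ((r.den : ℝ)) * θ = ((r.num : ℝ)) := by
      rw [← hr, Rat.cast_def]
      field_simp
    have : ((r.den * Q : ℕ) : ℝ) * θ - ((r.num * Q : ℤ) : ℝ) = 0 := by
      push_cast
      nlinarith [hden]
    rw [this, abs_zero]
    positivity
  · have hirr : Irrational θ := fun ⟨r, hr⟩ => hrat ⟨r, hr⟩
    have hne : (Finset.Icc 1 Q).Nonempty := ⟨1, Finset.mem_Icc.mpr ⟨le_refl 1, hQ⟩⟩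
    set δ : ℝ := (Finset.Icc 1 Q).inf' hne fun m => |(m : ℝ) * θ - (round ((m : ℝ) * θ) : ℝ)|
      with hδ
    have hδpos : 0 < δ := by
      rw [hδ, Finset.lt_inf'_iff]
      intro m hm
      rw [Finset.mem_Icc] at hm
      have : Irrational ((m : ℝ) * θ) := hirr.natCast_mul (by omega)
      have hne2 : (m : ℝ) * θ ≠ (round ((m : ℝ) * θ) : ℝ) := this.ne_int _
      exact abs_pos.mpr (sub_ne_zero.mpr hne2)
    obtain ⟨n, hn⟩ := exists_nat_one_div_lt hδpos
    obtain ⟨j, kk, hk0, hkn, hjk⟩ := Real.exists_int_int_abs_mul_sub_le θ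
      (n := n + 1) (Nat.succ_pos n)
    set q : ℕ := kk.toNat with hqdef
    have hqk : (q : ℤ) = kk := Int.toNat_of_nonneg hk0.le
    have hq1 : 1 ≤ q := by omega
    have hqn : q ≤ n + 1 := by exact_mod_cast hqk ▸ hkn
    have hqr : ((q : ℝ)) = ((kk : ℤ) : ℝ) := by exact_mod_cast congrArg (Int.cast : ℤ → ℝ) hqk
    have hsmall : |(q : ℝ) * θ - (j : ℝ)| ≤ 1 / ((n : ℝ) + 2) := by
      rw [hqr]
      convert hjk using 2
      push_cast
      ring
    have hlt : 1 / ((n : ℝ) + 2) < δ :=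
      lt_of_le_of_lt
        (div_le_div_of_nonneg_left (by norm_num) (by positivity) (by linarith)) hn
    have hQq : Q ≤ q := by
      by_contra hcon
      push_neg at hcon
      have hmem : q ∈ Finset.Icc 1 Q := Finset.mem_Icc.mpr ⟨hq1, by omega⟩
      have : δ ≤ |(q : ℝ) * θ - (round ((q : ℝ) * θ) : ℝ)| := Finset.inf'_le _ hmem
      have h2 : |(q : ℝ) * θ - (round ((q : ℝ) * θ) : ℝ)| ≤ |(q : ℝ) * θ - (j : ℝ)| :=
        round_le ((q : ℝ) * θ) j
      linarith
    refine ⟨q, hQq, j, lt_of_le_of_lt hsmall ?_⟩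
    have hq0r : (0 : ℝ) < (q : ℝ) := by exact_mod_cast Nat.lt_of_lt_of_le Nat.zero_lt_one hq1
    have h1 : (q : ℝ) < (n : ℝ) + 2 := by
      have : (q : ℝ) ≤ (n : ℝ) + 1 := by exact_mod_cast hqn
      linarith
    exact one_div_lt_one_div_of_lt hq0r h1

/-- Walking with step `s > 0`: within a bounded number of steps one lands near an integer. -/
lemma walk {s : ℝ} (hs : 0 < s) :
    ∃ M : ℕ, 1 ≤ M ∧ ∀ t : ℝ, ∃ m : ℕ, 1 ≤ m ∧ m ≤ M ∧ ∃ j : ℤ, |t + (m : ℝ) * s - (j : ℝ)| < s := by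
  refine ⟨⌈1 / s⌉₊ + 1, by omega, fun t => ?_⟩
  set j : ℤ := ⌈t + s⌉ with hjdef
  have h1 : t + s ≤ (j : ℝ) := Int.le_ceil _
  have h2 : (j : ℝ) < t + s + 1 := Int.ceil_lt_add_one _
  set w : ℝ := ((j : ℝ) - t) / s with hw
  have hw1 : 1 ≤ w := by
    rw [hw, le_div_iff₀ hs]
    linarith
  have hwub : w < 1 / s + 1 + 1 := by
    rw [hw, div_lt_iff₀ hs]
    have hcs : 1 ≤ (⌈1 / s⌉₊ : ℝ) * s ∨ True := Or.inr trivial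
    have h1s : (1:ℝ) / s * s = 1 := by field_simp
    nlinarith
  have hfl1 : 1 ≤ ⌊w⌋ := Int.le_floor.mpr (by exact_mod_cast hw1)
  set m : ℕ := ⌊w⌋.toNat with hm
  have hmw : (m : ℤ) = ⌊w⌋ := Int.toNat_of_nonneg (by omega)
  have hm1 : 1 ≤ m := by omega
  have hmr : (m : ℝ) ≤ w := by
    have : ((⌊w⌋ : ℤ) : ℝ) ≤ w := Int.floor_le w
    rw [← hmw] at this
    exact_mod_cast this
  have hmM : m ≤ ⌈1 / s⌉₊ + 1 := by
    have hceil : 1 / s ≤ (⌈1 / s⌉₊ : ℝ) := Nat.le_ceil _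
    have : (m : ℝ) < (⌈1 / s⌉₊ : ℝ) + 2 := by linarith
    exact_mod_cast Nat.lt_succ_iff.mp (by exact_mod_cast this)
  refine ⟨m, hm1, hmM, j, ?_⟩
  have hfr : w - 1 < (m : ℝ) := by
    have : w - 1 < ((⌊w⌋ : ℤ) : ℝ) := by
      have := Int.sub_one_lt_floor w
      linarith
    rw [← hmw] at this
    exact_mod_cast this
  have hexp : t + (m : ℝ) * s - (j : ℝ) = ((m : ℝ) - w) * s := by
    rw [hw]
    field_simp
    ring
  rw [hexp, abs_mul, abs_of_pos hs]
  have habs : |(m : ℝ) - w| < 1 := by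
    rw [abs_lt]
    constructor <;> linarith
  nlinarith [abs_nonneg ((m : ℝ) - w)]

/-- Uniform inhomogeneous approximation by positive multiples of an irrational. -/
lemma unif {α : ℝ} (hα : Irrational α) {η : ℝ} (hη : 0 < η) :
    ∃ N : ℕ, 1 ≤ N ∧ ∀ t : ℝ, ∃ k : ℕ, 1 ≤ k ∧ k ≤ N ∧
      ∃ j : ℤ, |t + (k : ℝ) * α - (j : ℝ)| < η := by
  obtain ⟨q, hQq, j₀, hj₀⟩ := dirichlet α (⌈1 / η⌉₊ + 1) (by omega)
  have hq1 : 1 ≤ q := le_trans (by omega) hQq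
  have hq0r : (0 : ℝ) < q := by exact_mod_cast hq1
  set s : ℝ := (q : ℝ) * α - (j₀ : ℝ) with hsdef
  have hsne : s ≠ 0 := by
    have : Irrational ((q : ℝ) * α) := hα.natCast_mul (by omega)
    exact sub_ne_zero.mpr (this.ne_int j₀)
  have hsη : |s| < η := by
    have hceil : 1 / η ≤ (⌈1 / η⌉₊ : ℝ) := Nat.le_ceil _
    have hQr : (⌈1 / η⌉₊ : ℝ) + 1 ≤ (q : ℝ) := by exact_mod_cast hQq
    have h1q : 1 / (q : ℝ) < η := by
      rw [div_lt_iff₀ hq0r]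
      have h1η : 1 / η * η = 1 := by field_simp
      nlinarith
    exact lt_trans hj₀ h1q
  rcases hsne.lt_or_gt with hneg | hpos
  · -- s < 0 : walk with -s at -t
    obtain ⟨M, hM1, hMp⟩ := walk (s := -s) (by linarith)
    refine ⟨q * M, Nat.one_le_iff_ne_zero.mpr (by positivity), fun t => ?_⟩
    obtain ⟨m, hm1, hmM, j, hj⟩ := hMp (-t)
    refine ⟨m * q, Nat.one_le_iff_ne_zero.mpr (by positivity), by
      calc m * q ≤ M * q := Nat.mul_le_mul_right q hmM
        _ = q * M := Nat.mul_comm M q, ⟨(m : ℤ) * j₀ - j, ?_⟩⟩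
    have hexp : t + ((m * q : ℕ) : ℝ) * α - (((m : ℤ) * j₀ - j : ℤ) : ℝ)
        = -(-t + (m : ℝ) * (-s) - (j : ℝ)) := by
      rw [hsdef]
      push_cast
      ring
    rw [hexp, abs_neg]
    calc |(-t) + (m : ℝ) * (-s) - (j : ℝ)| < -s := hj
      _ ≤ |s| := by rw [abs_of_neg hneg]
      _ < η := hsη
  · -- s > 0
    obtain ⟨M, hM1, hMp⟩ := walk (s := s) hpos
    refine ⟨q * M, Nat.one_le_iff_ne_zero.mpr (by positivity), fun t => ?_⟩
    obtain ⟨m, hm1, hmM, j, hj⟩ := hMp t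
    refine ⟨m * q, Nat.one_le_iff_ne_zero.mpr (by positivity), by
      calc m * q ≤ M * q := Nat.mul_le_mul_right q hmM
        _ = q * M := Nat.mul_comm M q, ⟨j + (m : ℤ) * j₀, ?_⟩⟩
    have hexp : t + ((m * q : ℕ) : ℝ) * α - ((j + (m : ℤ) * j₀ : ℤ) : ℝ)
        = t + (m : ℝ) * s - (j : ℝ) := by
      rw [hsdef]
      push_cast
      ring
    rw [hexp]
    calc |t + (m : ℝ) * s - (j : ℝ)| < s := hj
      _ ≤ |s| := le_abs_self s
      _ < η := hsη

/-- First AP point past a threshold. -/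
lemma findn (x y c : ℝ) (hy : 0 < y) (hxc : x + y ≤ c) :
    ∃ n : ℕ, 1 ≤ n ∧ c < x + y * n ∧ x + y * n ≤ c + y := by
  have hex : ∃ n : ℕ, c < x + y * n := by
    obtain ⟨m, hm⟩ := exists_nat_gt ((c - x) / y)
    refine ⟨m, ?_⟩
    rw [div_lt_iff₀ hy] at hm
    nlinarith
  classical
  set n := Nat.find hex with hn
  have hspec : c < x + y * n := Nat.find_spec hex
  have hn1 : ¬ c < x + y * (1 : ℕ) := by push_cast; linarith
  have hn0 : ¬ c < x + y * (0 : ℕ) := by push_cast; nlinarith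
  have hne2 : 2 ≤ n := by
    rcases Nat.lt_or_ge n 2 with h | h
    · interval_cases n
      · exact absurd hspec hn0
      · exact absurd hspec hn1
    · exact h
  have hmin : ¬ c < x + y * ((n - 1 : ℕ) : ℝ) := Nat.find_min hex (by omega)
  push_neg at hmin
  have hcast : ((n - 1 : ℕ) : ℝ) = (n : ℝ) - 1 := by
    have : (1 : ℕ) ≤ n := by omega
    push_cast [Nat.cast_sub this]
    ring
  rw [hcast] at hmin
  exact ⟨n, by omega, hspec, by nlinarith⟩

lemma AA_cast_succ (i : ℕ) : (AA (i + 1) : ℝ) = (AA i : ℝ) + (i : ℝ) + 2 := by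
  rw [AA_succ]
  push_cast
  ring

set_option maxHeartbeats 1000000 in
/-- Every increasing AP hits the hole set. -/
lemma hit {q₀ : ℕ} (hq₀ : 1 ≤ q₀) (x y : ℝ) (hy : 0 < y) :
    ∃ n : ℕ, 1 ≤ n ∧ x + y * n ∈ H q₀ := by
  by_cases hrat : ∃ r : ℚ, (r : ℝ) = y
  · obtain ⟨r, hr⟩ := hrat
    have hrpos : 0 < r := by
      have : (0 : ℝ) < (r : ℝ) := by rw [hr]; exact hy
      exact_mod_cast this
    have ha : 0 < r.num := Rat.num_pos.mpr hrpos
    have hb : 0 < r.den := r.pos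
    have hbr : (0 : ℝ) < (r.den : ℝ) := by exact_mod_cast hb
    have hba : (r.den : ℝ) * y = (r.num : ℝ) := by
      rw [← hr, Rat.cast_def]
      field_simp
    obtain ⟨q, hQq, j, hj⟩ := dirichlet ((r.den : ℝ) * x) q₀ hq₀
    have hq1 : 1 ≤ q := le_trans hq₀ hQq
    set v : ℕ := ⌈x + y⌉₊ + r.num.toNat with hv
    obtain ⟨i, hvi, hbbi, hqqi⟩ : ∃ i, v ≤ i ∧ bb i = r.den ∧ qq q₀ i = q :=
      ⟨Nat.pair (Nat.pair (r.den - 1) (q - q₀)) v, Nat.right_le_pair _ _,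
        by simp only [bb, Nat.unpair_pair]; omega,
        by simp only [qq, cc, Nat.unpair_pair]; omega⟩
    have hiA : (i : ℝ) ≤ (AA i : ℝ) := by exact_mod_cast AA_ge i
    have hvr : (v : ℝ) ≤ (AA i : ℝ) := le_trans (by exact_mod_cast hvi) hiA
    have hceil : x + y ≤ (⌈x + y⌉₊ : ℝ) := Nat.le_ceil _
    have hvup : (⌈x + y⌉₊ : ℝ) ≤ (v : ℝ) := by
      rw [hv]; push_cast; linarith [Nat.cast_nonneg (α := ℝ) r.num.toNat]
    have hxyA : x + y ≤ (AA i : ℝ) + 1 := by linarith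
    obtain ⟨n, hn1, hlow, hup⟩ := findn x y ((AA i : ℝ) + 1) hy hxyA
    have hApos : (0 : ℝ) ≤ (AA i : ℝ) := by positivity
    have hpos : 0 < x + y * n := by linarith
    have habs : |x + y * (n : ℝ)| = x + y * n := abs_of_pos hpos
    refine ⟨n, hn1, Set.mem_iUnion.mpr ⟨i, ?_, ?_, ⟨j + (q : ℤ) * (n : ℤ) * r.num, ?_⟩⟩⟩
    · rw [habs]; linarith
    · rw [habs, AA_cast_succ]
      have hbr1 : (1 : ℝ) ≤ (r.den : ℝ) := by exact_mod_cast hb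
      have hya : y ≤ (r.num : ℝ) := by nlinarith
      have hanat : (r.num.toNat : ℤ) = r.num := Int.toNat_of_nonneg ha.le
      have hai : (r.num : ℝ) ≤ (i : ℝ) := by
        have h1 : r.num.toNat ≤ v := by omega
        have h2 : (r.num.toNat : ℝ) ≤ (i : ℝ) := by exact_mod_cast le_trans h1 hvi
        have h3 : ((r.num.toNat : ℤ) : ℝ) = (r.num : ℝ) := by exact_mod_cast congrArg (Int.cast : ℤ → ℝ) hanat
        rw [← h3]
        exact_mod_cast h2
      linarith
    · rw [hqqi]
      have hddi : (dd q₀ i : ℝ) = (q : ℝ) * (r.den : ℝ) := by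
        simp only [dd, hbbi, hqqi]
        push_cast
        ring
      have hexp : (dd q₀ i : ℝ) * (x + y * n) - ((j + (q : ℤ) * (n : ℤ) * r.num : ℤ) : ℝ)
          = (q : ℝ) * ((r.den : ℝ) * x) - (j : ℝ) := by
        rw [hddi]
        push_cast
        linear_combination ((q : ℝ) * (n : ℝ)) * hba
      rw [hexp]
      exact hj
  · have hirr : Irrational y := fun ⟨r, hr⟩ => hrat ⟨r, hr⟩
    have hα : Irrational ((q₀ : ℝ) * y) := hirr.natCast_mul (by omega)
    have hq₀r : (0 : ℝ) < (q₀ : ℝ) := by exact_mod_cast hq₀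
    obtain ⟨N, hN1, hU⟩ := unif hα (by positivity : (0:ℝ) < 1 / (q₀ : ℝ))
    set v : ℕ := ⌈x + y⌉₊ + ⌈((N : ℝ) + 1) * y⌉₊ with hv
    obtain ⟨i, hvi, hbbi, hqqi⟩ : ∃ i, v ≤ i ∧ bb i = 1 ∧ qq q₀ i = q₀ :=
      ⟨Nat.pair (Nat.pair 0 0) v, Nat.right_le_pair _ _,
        by simp only [bb, Nat.unpair_pair], by simp [qq, cc, Nat.unpair_pair]⟩
    have hddi : dd q₀ i = q₀ := by simp [dd, hbbi, hqqi]
    have hiA : (i : ℝ) ≤ (AA i : ℝ) := by exact_mod_cast AA_ge i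
    have hvr : (v : ℝ) ≤ (AA i : ℝ) := le_trans (by exact_mod_cast hvi) hiA
    have hceil : x + y ≤ (⌈x + y⌉₊ : ℝ) := Nat.le_ceil _
    have hceil2 : ((N : ℝ) + 1) * y ≤ (⌈((N : ℝ) + 1) * y⌉₊ : ℝ) := Nat.le_ceil _
    have hvup : (⌈x + y⌉₊ : ℝ) + (⌈((N : ℝ) + 1) * y⌉₊ : ℝ) = (v : ℝ) := by
      rw [hv]; push_cast; ring
    have hxyA : x + y ≤ (AA i : ℝ) + 1 := by
      have hc2 : (0 : ℝ) ≤ (⌈((N : ℝ) + 1) * y⌉₊ : ℝ) := Nat.cast_nonneg _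
      have h1 : (⌈x + y⌉₊ : ℝ) ≤ (v : ℝ) := by rw [← hvup]; linarith
      linarith
    obtain ⟨n₁, hn₁1, hlow, hup⟩ := findn x y ((AA i : ℝ) + 1) hy hxyA
    obtain ⟨k, hk1, hkN, j, hj⟩ := hU ((q₀ : ℝ) * (x + y * n₁))
    refine ⟨n₁ + k, by omega, Set.mem_iUnion.mpr ⟨i, ?_, ?_, ⟨j, ?_⟩⟩⟩
    · have hApos : (0 : ℝ) ≤ (AA i : ℝ) := Nat.cast_nonneg _
      have hyk : 0 ≤ y * (k : ℝ) := by positivity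
      have hpos : 0 < x + y * ((n₁ + k : ℕ) : ℝ) := by push_cast; nlinarith
      rw [abs_of_pos hpos]
      push_cast
      nlinarith
    · have hyk : y * (k : ℝ) ≤ y * (N : ℝ) := by
        apply mul_le_mul_of_nonneg_left _ hy.le
        exact_mod_cast hkN
      have hNv : ((N : ℝ) + 1) * y ≤ (v : ℝ) := by
        rw [← hvup]
        have : (0:ℝ) ≤ (⌈x + y⌉₊ : ℝ) := Nat.cast_nonneg _
        linarith
      have hpos : 0 < x + y * ((n₁ + k : ℕ) : ℝ) := by
        push_cast
        nlinarith [ Nat.cast_nonneg (α := ℝ) (AA i) ]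
      rw [abs_of_pos hpos, AA_cast_succ]
      have hvir : (v : ℝ) ≤ (i : ℝ) := by exact_mod_cast hvi
      have hNv2 : (N : ℝ) * y + y ≤ (v : ℝ) := by nlinarith
      push_cast
      nlinarith
    · rw [hqqi]
      have hexp : (dd q₀ i : ℝ) * (x + y * ((n₁ + k : ℕ) : ℝ)) - (j : ℝ)
          = ((q₀ : ℝ) * (x + y * n₁)) + (k : ℝ) * ((q₀ : ℝ) * y) - (j : ℝ) := by
        rw [hddi]
        push_cast
        ring
      rw [hexp]
      exact hj

end

end Stmt10Aux

theorem stmt_10 (p : ℝ) (hp0 : 0 ≤ p) (hp1 : p < 1) :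
    ∃ E : Set ℝ, MeasurableSet E ∧ PLarge p E ∧
      ¬ ∃ x y : ℝ, y ≠ 0 ∧ ∀ n : ℕ, 1 ≤ n → x + y * n ∈ E := by
  have hε : 0 < 1 - p := by linarith
  set q₀ : ℕ := ⌈4 / (1 - p)⌉₊ with hq₀def
  have hq₀1 : 1 ≤ q₀ := by
    have : 0 < q₀ := Nat.ceil_pos.mpr (by positivity)
    omega
  have hq₀r : (0 : ℝ) < (q₀ : ℝ) := by exact_mod_cast hq₀1
  have h4 : 4 / (q₀ : ℝ) ≤ 1 - p := by
    have h1 : 4 / (1 - p) ≤ (q₀ : ℝ) := Nat.le_ceil _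
    rw [div_le_iff₀ hq₀r]
    rw [div_le_iff₀ hε] at h1
    nlinarith
  refine ⟨(Stmt10Aux.H q₀)ᶜ, (Stmt10Aux.measurableSet_H q₀).compl, ?_, ?_⟩
  · intro k
    have hvol := Stmt10Aux.vol_H_cell hq₀1 k
    have hmeas : volume (Stmt10Aux.H q₀ ∩ Set.Icc (k : ℝ) ((k : ℝ) + 1))
        ≤ ENNReal.ofReal (1 - p) :=
      le_trans hvol (ENNReal.ofReal_le_ofReal h4)
    have hIcc : volume (Set.Icc (k : ℝ) ((k : ℝ) + 1)) = 1 := by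
      rw [Real.volume_Icc]
      norm_num
    have hfin : volume (Stmt10Aux.H q₀ ∩ Set.Icc (k : ℝ) ((k : ℝ) + 1)) ≠ ⊤ :=
      (lt_of_le_of_lt hmeas ENNReal.ofReal_lt_top).ne
    have hset : (Stmt10Aux.H q₀)ᶜ ∩ Set.Icc (k : ℝ) ((k : ℝ) + 1)
        = Set.Icc (k : ℝ) ((k : ℝ) + 1)
          \ (Stmt10Aux.H q₀ ∩ Set.Icc (k : ℝ) ((k : ℝ) + 1)) := by
      ext t
      simp only [Set.mem_inter_iff, Set.mem_compl_iff, Set.mem_diff]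
      tauto
    rw [hset, measure_diff Set.inter_subset_right
      ((Stmt10Aux.measurableSet_H q₀).inter measurableSet_Icc).nullMeasurableSet hfin, hIcc]
    have hadd : ENNReal.ofReal p + volume (Stmt10Aux.H q₀ ∩ Set.Icc (k : ℝ) ((k : ℝ) + 1))
        ≤ ENNReal.ofReal p + ENNReal.ofReal (1 - p) := add_le_add le_rfl hmeas
    have he : ENNReal.ofReal p + ENNReal.ofReal (1 - p) = 1 := by
      rw [← ENNReal.ofReal_add hp0 hε.le]
      have h2 : p + (1 - p) = 1 := by ring
      rw [h2, ENNReal.ofReal_one]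
    exact ENNReal.le_sub_of_add_le_right hfin (he ▸ hadd)
  · rintro ⟨x, y, hy, hmem⟩
    rcases lt_or_gt_of_ne hy with hneg | hpos
    · obtain ⟨n, hn1, hnH⟩ := Stmt10Aux.hit hq₀1 (-x) (-y) (by linarith)
      apply hmem n hn1
      have h2 := Stmt10Aux.neg_mem_H hnH
      have he : -(-x + -y * (n : ℝ)) = x + y * n := by ring
      rwa [he] at h2
    · obtain ⟨n, hn1, hnH⟩ := Stmt10Aux.hit hq₀1 x y hpos
      exact (hmem n hn1) hnH
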